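/- Let H be a real Hilbert space, and let T₁, T₂ : H → H be θ₁-averaged and θ₂-averaged mappings with θ₁, θ₂ ∈ (0,1). Suppose there exist ρ₁, ρ₂ > 0 such that θ₁ ≤ ρ₂/(ρ₁ + ρ₂) and θ₂ ≤ ρ₁/(ρ₁ + ρ₂). Let (x_{1,k})_k and (x_{2,k})_k be sequences in H such that: (a) x_{1,k} ⇀ x₁ and x_{2,k} ⇀ x₂; (b) T₁(x_{1,k}) ⇀ y and T₂(x_{2,k}) ⇀ y; (c) ρ₁(x_{1,k} − T₁(x_{1,k})) + ρ₂(x_{2,k} − T₂(x_{2,k})) → 0 strongly; (d) T₁(x_{1,k}) − T₂(x_{2,k}) → 0 strongly. Then T₁(x₁) = T₂(x₂) = y. -/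

import Mathlib

open scoped InnerProductSpace

open Filter
open scoped Topology

section Helpers

variable {H : Type*} [NormedAddCommGroup H] [InnerProductSpace ℝ H]

/-- A weakly convergent sequence is bounded (Banach–Steinhaus). -/
lemma weak_bdd_aux [CompleteSpace H] (a : ℕ → H) (l : H)
    (h : ∀ u : H, Tendsto (fun k => ⟪a k, u⟫_ℝ) atTop (𝓝 ⟪l, u⟫_ℝ)) :
    ∃ C : ℝ, ∀ k, ‖a k‖ ≤ C := by
  have hpt : ∀ u : H, ∃ C, ∀ k : ℕ, ‖(innerSL ℝ (a k)) u‖ ≤ C := by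
    intro u
    obtain ⟨C, hC⟩ := ((h u).norm).bddAbove_range
    exact ⟨C, fun k => hC ⟨k, rfl⟩⟩
  obtain ⟨C, hC⟩ := banach_steinhaus hpt
  exact ⟨C, fun k => by simpa [innerSL_apply_norm] using hC k⟩

/-- weak × strong inner product convergence. -/
lemma weak_strong_inner [CompleteSpace H] (a b : ℕ → H) (l m : H)
    (ha : ∀ u : H, Tendsto (fun k => ⟪a k, u⟫_ℝ) atTop (𝓝 ⟪l, u⟫_ℝ))
    (hb : Tendsto b atTop (𝓝 m)) :
    Tendsto (fun k => ⟪a k, b k⟫_ℝ) atTop (𝓝 ⟪l, m⟫_ℝ) := by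
  obtain ⟨C, hC⟩ := weak_bdd_aux a l ha
  have h1 : Tendsto (fun k => ⟪a k, b k - m⟫_ℝ) atTop (𝓝 0) := by
    have hbound : ∀ k, ‖⟪a k, b k - m⟫_ℝ‖ ≤ C * ‖b k - m‖ := by
      intro k
      calc ‖⟪a k, b k - m⟫_ℝ‖ ≤ ‖a k‖ * ‖b k - m‖ := norm_inner_le_norm _ _
        _ ≤ C * ‖b k - m‖ := mul_le_mul_of_nonneg_right (hC k) (norm_nonneg _)
    have hg : Tendsto (fun k => C * ‖b k - m‖) atTop (𝓝 0) := by
      simpa using ((hb.sub_const m).norm).const_mul C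
    exact squeeze_zero_norm hbound hg
  have h2 := (ha m).add h1
  rw [add_zero] at h2
  have : (fun k => ⟪a k, m⟫_ℝ + ⟪a k, b k - m⟫_ℝ) = fun k => ⟪a k, b k⟫_ℝ := by
    funext k; rw [inner_sub_right]; ring
  rwa [this] at h2

/-- Key inequality for an averaged operator. -/
lemma avg_key (R T : H → H) (hR : ∀ x y : H, ‖R x - R y‖ ≤ ‖x - y‖)
    (θ : ℝ)
    (hT : ∀ x : H, T x = (1 - θ) • x + θ • R x) (x z : H) :
    (1 - 2*θ) * ‖(x - T x) - (z - T z)‖^2 ≤ 2*θ * ⟪T x - T z, (x - T x) - (z - T z)⟫_ℝ := by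
  set a := x - z with hadef
  set b := R x - R z with hbdef
  have h1 : T x - T z = (1 - θ) • a + θ • b := by
    rw [hT x, hT z, hadef, hbdef]; module
  have h2 : (x - T x) - (z - T z) = θ • (a - b) := by
    rw [hT x, hT z, hadef, hbdef]; module
  have hba : ‖b‖^2 ≤ ‖a‖^2 := by
    have := hR x z
    nlinarith [norm_nonneg b, norm_nonneg a]
  rw [h1, h2, norm_smul]
  have hexp : ⟪(1 - θ) • a + θ • b, θ • (a - b)⟫_ℝ
      = θ * ((1-θ)*‖a‖^2 - θ*‖b‖^2 + (2*θ-1)*⟪a,b⟫_ℝ) := by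
    simp [inner_add_left, inner_smul_left, inner_smul_right, inner_sub_right,
      real_inner_self_eq_norm_sq, real_inner_comm b a]
    ring_nf
    simp
  rw [hexp]
  have hnab : ‖a - b‖^2 = ‖a‖^2 - 2*⟪a,b⟫_ℝ + ‖b‖^2 := by
    rw [norm_sub_sq_real]
  rw [mul_pow, hnab]
  have hn : ‖θ‖^2 = θ^2 := by rw [Real.norm_eq_abs, sq_abs]
  rw [hn]
  nlinarith [sq_nonneg θ]

lemma step1 (θ ra rb n I : ℝ) (hθ : 0 < θ) (hn : 0 ≤ n) (hbal : θ*(ra+rb) ≤ rb)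
    (hrb : 0 ≤ rb) (key : (1-2*θ)*n ≤ 2*θ*I) : (ra-rb)*n ≤ 2*rb*I := by
  have hm : θ*((ra-rb)*n) ≤ θ*(2*rb*I) := by
    nlinarith [mul_le_mul_of_nonneg_left key hrb, mul_nonneg hn (sub_nonneg.2 hbal)]
  exact (mul_le_mul_iff_right₀ hθ).mp hm

lemma step2 (r1 r2 n1 n2 I1 I2 : ℝ) (h1q : 0 < r1) (h2q : 0 < r2)
    (h1 : (r1-r2)*n1 ≤ 2*r2*I1) (h2 : (r2-r1)*n2 ≤ 2*r1*I2) :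
    (r1-r2)/(r1*r2) * (r1^2*n1 - r2^2*n2) ≤ 2*(r1*I1 + r2*I2) := by
  rw [div_mul_eq_mul_div, div_le_iff₀ (mul_pos h1q h2q)]
  nlinarith [mul_le_mul_of_nonneg_left h1 (sq_nonneg r1),
    mul_le_mul_of_nonneg_left h2 (sq_nonneg r2)]

lemma step3 (r1 r2 a b : ℝ) (h1 : 0 < r1) (h2 : 0 < r2) (ha : 0 ≤ a) (hb : 0 ≤ b)
    (h : (r1-r2)/(r1*r2)*(r1^2*a - r2^2*b) ≤ 2*(-(r1*a) - r2*b)) : a ≤ 0 ∧ b ≤ 0 := by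
  rw [div_mul_eq_mul_div, div_le_iff₀ (mul_pos h1 h2)] at h
  have hs : (0:ℝ) ≤ r1 + r2 := by linarith
  have hca : 0 < r1^2*(r1+r2) := by positivity
  have hcb : 0 < r2^2*(r1+r2) := by positivity
  have hga : r1^2*(r1+r2)*a ≤ 0 := by
    nlinarith [mul_nonneg (mul_nonneg (mul_pos h2 h2).le hs) hb]
  have hgb : r2^2*(r1+r2)*b ≤ 0 := by
    nlinarith [mul_nonneg (mul_nonneg (mul_pos h1 h1).le hs) ha]
  constructor
  · nlinarith [hga, hca]
  · nlinarith [hgb, hcb]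

end Helpers


/-- Demiclosedness principle for two balanced averaged operators. -/
theorem demiclosedness_two_balanced_averaged {H : Type*} [NormedAddCommGroup H]
    [InnerProductSpace ℝ H] [CompleteSpace H]
    (T₁ T₂ : H → H) (θ₁ θ₂ : ℝ) (hθ₁ : 0 < θ₁) (hθ₁' : θ₁ < 1)
    (hθ₂ : 0 < θ₂) (hθ₂' : θ₂ < 1)
    (hT₁ : ∃ R : H → H, (∀ x y : H, ‖R x - R y‖ ≤ ‖x - y‖) ∧
      ∀ x : H, T₁ x = (1 - θ₁) • x + θ₁ • R x)
    (hT₂ : ∃ R : H → H, (∀ x y : H, ‖R x - R y‖ ≤ ‖x - y‖) ∧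
      ∀ x : H, T₂ x = (1 - θ₂) • x + θ₂ • R x)
    (ρ₁ ρ₂ : ℝ) (hρ₁ : 0 < ρ₁) (hρ₂ : 0 < ρ₂)
    (hbal₁ : θ₁ ≤ ρ₂ / (ρ₁ + ρ₂)) (hbal₂ : θ₂ ≤ ρ₁ / (ρ₁ + ρ₂))
    (x₁ x₂ : ℕ → H) (xl₁ xl₂ y : H)
    (ha₁ : ∀ u : H,
      Filter.Tendsto (fun k => ⟪x₁ k, u⟫_ℝ) Filter.atTop (nhds ⟪xl₁, u⟫_ℝ))
    (ha₂ : ∀ u : H,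
      Filter.Tendsto (fun k => ⟪x₂ k, u⟫_ℝ) Filter.atTop (nhds ⟪xl₂, u⟫_ℝ))
    (hb₁ : ∀ u : H,
      Filter.Tendsto (fun k => ⟪T₁ (x₁ k), u⟫_ℝ) Filter.atTop (nhds ⟪y, u⟫_ℝ))
    (hb₂ : ∀ u : H,
      Filter.Tendsto (fun k => ⟪T₂ (x₂ k), u⟫_ℝ) Filter.atTop (nhds ⟪y, u⟫_ℝ))
    (hc : Filter.Tendsto
      (fun k => ρ₁ • (x₁ k - T₁ (x₁ k)) + ρ₂ • (x₂ k - T₂ (x₂ k)))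
      Filter.atTop (nhds 0))
    (hd : Filter.Tendsto (fun k => T₁ (x₁ k) - T₂ (x₂ k)) Filter.atTop (nhds 0)) :
    T₁ xl₁ = y ∧ T₂ xl₂ = y := by
  obtain ⟨R₁, hR₁, hTR₁⟩ := hT₁
  obtain ⟨R₂, hR₂, hTR₂⟩ := hT₂
  set δ₁ : H := T₁ xl₁ - y with hδ₁def
  set δ₂ : H := T₂ xl₂ - y with hδ₂def
  set d₁ : ℕ → H := fun k => (x₁ k - T₁ (x₁ k)) - (xl₁ - T₁ xl₁) with hd₁def
  set d₂ : ℕ → H := fun k => (x₂ k - T₂ (x₂ k)) - (xl₂ - T₂ xl₂) with hd₂def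
  set A₁ : ℕ → H := fun k => T₁ (x₁ k) - T₁ xl₁ with hA₁def
  set A₂ : ℕ → H := fun k => T₂ (x₂ k) - T₂ xl₂ with hA₂def
  set s : ℕ → H := fun k => ρ₁ • d₁ k + ρ₂ • d₂ k with hsdef
  clear_value δ₁ δ₂ d₁ d₂ A₁ A₂ s
  have hsum : (0:ℝ) < ρ₁ + ρ₂ := by linarith
  have hbal₁' : θ₁ * (ρ₁ + ρ₂) ≤ ρ₂ := by
    rw [le_div_iff₀ hsum] at hbal₁; exact hbal₁
  have hbal₂' : θ₂ * (ρ₁ + ρ₂) ≤ ρ₁ := by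
    rw [le_div_iff₀ hsum] at hbal₂; exact hbal₂
  -- weak convergences
  have hd₁w : ∀ u : H, Tendsto (fun k => ⟪d₁ k, u⟫_ℝ) atTop (𝓝 ⟪δ₁, u⟫_ℝ) := by
    intro u
    have h := ((ha₁ u).sub (hb₁ u)).sub
      (tendsto_const_nhds (x := ⟪xl₁ - T₁ xl₁, u⟫_ℝ) (f := atTop (α := ℕ)))
    have e1 : ∀ k, ⟪d₁ k, u⟫_ℝ = ⟪x₁ k, u⟫_ℝ - ⟪T₁ (x₁ k), u⟫_ℝ - ⟪xl₁ - T₁ xl₁, u⟫_ℝ := by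
      intro k; simp [hd₁def, inner_sub_left]
    have e2 : ⟪δ₁, u⟫_ℝ = ⟪xl₁, u⟫_ℝ - ⟪y, u⟫_ℝ - ⟪xl₁ - T₁ xl₁, u⟫_ℝ := by
      simp [hδ₁def, inner_sub_left]; try ring
    rw [e2]; simpa only [e1] using h
  have hd₂w : ∀ u : H, Tendsto (fun k => ⟪d₂ k, u⟫_ℝ) atTop (𝓝 ⟪δ₂, u⟫_ℝ) := by
    intro u
    have h := ((ha₂ u).sub (hb₂ u)).sub
      (tendsto_const_nhds (x := ⟪xl₂ - T₂ xl₂, u⟫_ℝ) (f := atTop (α := ℕ)))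
    have e1 : ∀ k, ⟪d₂ k, u⟫_ℝ = ⟪x₂ k, u⟫_ℝ - ⟪T₂ (x₂ k), u⟫_ℝ - ⟪xl₂ - T₂ xl₂, u⟫_ℝ := by
      intro k; simp [hd₂def, inner_sub_left]
    have e2 : ⟪δ₂, u⟫_ℝ = ⟪xl₂, u⟫_ℝ - ⟪y, u⟫_ℝ - ⟪xl₂ - T₂ xl₂, u⟫_ℝ := by
      simp [hδ₂def, inner_sub_left]; try ring
    rw [e2]; simpa only [e1] using h
  have hA₁w : ∀ u : H, Tendsto (fun k => ⟪A₁ k, u⟫_ℝ) atTop (𝓝 ⟪-δ₁, u⟫_ℝ) := by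
    intro u
    have h := (hb₁ u).sub
      (tendsto_const_nhds (x := ⟪T₁ xl₁, u⟫_ℝ) (f := atTop (α := ℕ)))
    have e1 : ∀ k, ⟪A₁ k, u⟫_ℝ = ⟪T₁ (x₁ k), u⟫_ℝ - ⟪T₁ xl₁, u⟫_ℝ := by
      intro k; simp [hA₁def, inner_sub_left]
    have e2 : ⟪-δ₁, u⟫_ℝ = ⟪y, u⟫_ℝ - ⟪T₁ xl₁, u⟫_ℝ := by
      simp [hδ₁def, inner_sub_left]; try ring
    rw [e2]; simpa only [e1] using h
  have hEw : ∀ u : H, Tendsto (fun k => ⟪ρ₁ • d₁ k - ρ₂ • d₂ k, u⟫_ℝ) atTop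
      (𝓝 ⟪ρ₁ • δ₁ - ρ₂ • δ₂, u⟫_ℝ) := by
    intro u
    have h := ((hd₁w u).const_mul ρ₁).sub ((hd₂w u).const_mul ρ₂)
    simpa only [inner_sub_left, real_inner_smul_left] using h
  -- the balance equation for weak limits
  have hw : ρ₁ • (xl₁ - y) + ρ₂ • (xl₂ - y) = (0:H) := by
    have h1 : ∀ u : H, Tendsto
        (fun k => ⟪ρ₁ • (x₁ k - T₁ (x₁ k)) + ρ₂ • (x₂ k - T₂ (x₂ k)), u⟫_ℝ)
        atTop (𝓝 ⟪ρ₁ • (xl₁ - y) + ρ₂ • (xl₂ - y), u⟫_ℝ) := by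
      intro u
      have h := (((ha₁ u).sub (hb₁ u)).const_mul ρ₁).add
        (((ha₂ u).sub (hb₂ u)).const_mul ρ₂)
      simpa only [inner_add_left, inner_sub_left, real_inner_smul_left] using h
    have h2 : ∀ u : H, ⟪ρ₁ • (xl₁ - y) + ρ₂ • (xl₂ - y), u⟫_ℝ = 0 := by
      intro u
      have h3 : Tendsto
          (fun k => ⟪ρ₁ • (x₁ k - T₁ (x₁ k)) + ρ₂ • (x₂ k - T₂ (x₂ k)), u⟫_ℝ)
          atTop (𝓝 ⟪(0:H), u⟫_ℝ) :=
        hc.inner (tendsto_const_nhds (x := u) (f := atTop (α := ℕ)))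
      rw [inner_zero_left] at h3
      exact tendsto_nhds_unique (h1 u) h3
    have h4 := h2 (ρ₁ • (xl₁ - y) + ρ₂ • (xl₂ - y))
    rwa [inner_self_eq_zero] at h4
  -- strong convergences
  have hs : Tendsto s atTop (𝓝 (ρ₁ • δ₁ + ρ₂ • δ₂)) := by
    have h := hc.sub (tendsto_const_nhds
      (x := ρ₁ • (xl₁ - T₁ xl₁) + ρ₂ • (xl₂ - T₂ xl₂)) (f := atTop (α := ℕ)))
    rw [zero_sub] at h
    have e1 : (fun k => (ρ₁ • (x₁ k - T₁ (x₁ k)) + ρ₂ • (x₂ k - T₂ (x₂ k)))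
        - (ρ₁ • (xl₁ - T₁ xl₁) + ρ₂ • (xl₂ - T₂ xl₂))) = s := by
      funext k; simp only [hsdef, hd₁def, hd₂def]; module
    have e3 : ρ₁ • δ₁ + ρ₂ • δ₂ + (ρ₁ • (xl₁ - T₁ xl₁) + ρ₂ • (xl₂ - T₂ xl₂))
        = ρ₁ • (xl₁ - y) + ρ₂ • (xl₂ - y) := by
      simp only [hδ₁def, hδ₂def]; module
    rw [hw] at e3
    have e2 : ρ₁ • δ₁ + ρ₂ • δ₂ = -(ρ₁ • (xl₁ - T₁ xl₁) + ρ₂ • (xl₂ - T₂ xl₂)) :=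
      eq_neg_of_add_eq_zero_left e3
    rw [e1, ← e2] at h
    exact h
  have hB : Tendsto (fun k => A₂ k - A₁ k) atTop (𝓝 (δ₁ - δ₂)) := by
    have h := (hd.neg).sub (tendsto_const_nhds
      (x := T₂ xl₂ - T₁ xl₁) (f := atTop (α := ℕ)))
    rw [neg_zero, zero_sub] at h
    have e1 : (fun k => -(T₁ (x₁ k) - T₂ (x₂ k)) - (T₂ xl₂ - T₁ xl₁))
        = fun k => A₂ k - A₁ k := by
      funext k; simp only [hA₁def, hA₂def]; abel
    have e2 : -(T₂ xl₂ - T₁ xl₁) = δ₁ - δ₂ := by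
      simp only [hδ₁def, hδ₂def]; abel
    rw [e1, e2] at h
    exact h
  -- the per-index key inequalities
  have key₁ : ∀ k, (1 - 2*θ₁) * ‖d₁ k‖^2 ≤ 2*θ₁ * ⟪A₁ k, d₁ k⟫_ℝ := by
    intro k
    have h := avg_key R₁ T₁ hR₁ θ₁ hTR₁ (x₁ k) xl₁
    simpa only [hA₁def, hd₁def] using h
  have key₂ : ∀ k, (1 - 2*θ₂) * ‖d₂ k‖^2 ≤ 2*θ₂ * ⟪A₂ k, d₂ k⟫_ℝ := by
    intro k
    have h := avg_key R₂ T₂ hR₂ θ₂ hTR₂ (x₂ k) xl₂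
    simpa only [hA₂def, hd₂def] using h
  -- the pointwise combined inequality
  have hptineq : ∀ k, (ρ₁ - ρ₂)/(ρ₁*ρ₂) * ⟪ρ₁ • d₁ k - ρ₂ • d₂ k, s k⟫_ℝ
      ≤ 2 * (⟪A₁ k, s k⟫_ℝ + ρ₂ * ⟪d₂ k, A₂ k - A₁ k⟫_ℝ) := by
    intro k
    have hQk : ⟪ρ₁ • d₁ k - ρ₂ • d₂ k, s k⟫_ℝ
        = ρ₁^2 * ‖d₁ k‖^2 - ρ₂^2 * ‖d₂ k‖^2 := by
      simp only [hsdef]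
      simp [inner_sub_left, inner_add_right, real_inner_smul_left, real_inner_smul_right,
        real_inner_self_eq_norm_sq, real_inner_comm (d₂ k) (d₁ k), norm_smul, mul_pow,
        Real.norm_eq_abs, sq_abs]
      ring
    have hPk : ⟪A₁ k, s k⟫_ℝ + ρ₂ * ⟪d₂ k, A₂ k - A₁ k⟫_ℝ
        = ρ₁ * ⟪A₁ k, d₁ k⟫_ℝ + ρ₂ * ⟪A₂ k, d₂ k⟫_ℝ := by
      simp only [hsdef]
      simp [inner_add_right, inner_sub_right, real_inner_smul_right,
        real_inner_comm (d₂ k) (A₂ k), real_inner_comm (d₂ k) (A₁ k)]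
      ring
    rw [hQk, hPk]
    have hn₁ : (0:ℝ) ≤ ‖d₁ k‖^2 := sq_nonneg _
    have hn₂ : (0:ℝ) ≤ ‖d₂ k‖^2 := sq_nonneg _
    have h1 : (ρ₁ - ρ₂) * ‖d₁ k‖^2 ≤ 2 * ρ₂ * ⟪A₁ k, d₁ k⟫_ℝ := by
      have := step1 θ₁ ρ₁ ρ₂ (‖d₁ k‖^2) (⟪A₁ k, d₁ k⟫_ℝ) hθ₁ hn₁ hbal₁' hρ₂.le (key₁ k)
      linarith
    have h2 : (ρ₂ - ρ₁) * ‖d₂ k‖^2 ≤ 2 * ρ₁ * ⟪A₂ k, d₂ k⟫_ℝ := by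
      have := step1 θ₂ ρ₂ ρ₁ (‖d₂ k‖^2) (⟪A₂ k, d₂ k⟫_ℝ) hθ₂ hn₂
        (by linarith : θ₂ * (ρ₂ + ρ₁) ≤ ρ₁) hρ₁.le (key₂ k)
      linarith
    have := step2 ρ₁ ρ₂ (‖d₁ k‖^2) (‖d₂ k‖^2) (⟪A₁ k, d₁ k⟫_ℝ) (⟪A₂ k, d₂ k⟫_ℝ)
      hρ₁ hρ₂ (by linarith) (by linarith)
    linarith
  -- limits of the scalar sequences
  have hQlim := weak_strong_inner (fun k => ρ₁ • d₁ k - ρ₂ • d₂ k) s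
      (ρ₁ • δ₁ - ρ₂ • δ₂) (ρ₁ • δ₁ + ρ₂ • δ₂) hEw hs
  have hP1lim := weak_strong_inner A₁ s (-δ₁) (ρ₁ • δ₁ + ρ₂ • δ₂) hA₁w hs
  have hP2lim := weak_strong_inner d₂ (fun k => A₂ k - A₁ k) δ₂ (δ₁ - δ₂) hd₂w hB
  have hfinal : (ρ₁ - ρ₂)/(ρ₁*ρ₂) * ⟪ρ₁ • δ₁ - ρ₂ • δ₂, ρ₁ • δ₁ + ρ₂ • δ₂⟫_ℝ
      ≤ 2 * (⟪-δ₁, ρ₁ • δ₁ + ρ₂ • δ₂⟫_ℝ + ρ₂ * ⟪δ₂, δ₁ - δ₂⟫_ℝ) :=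
    le_of_tendsto_of_tendsto' (hQlim.const_mul _)
      ((hP1lim.add (hP2lim.const_mul ρ₂)).const_mul 2) hptineq
  -- expand and conclude
  have hv1 : ⟪ρ₁ • δ₁ - ρ₂ • δ₂, ρ₁ • δ₁ + ρ₂ • δ₂⟫_ℝ
      = ρ₁^2*‖δ₁‖^2 - ρ₂^2*‖δ₂‖^2 := by
    simp only [inner_sub_left, inner_add_right, real_inner_smul_left,
      real_inner_smul_right, real_inner_self_eq_norm_sq, real_inner_comm δ₂ δ₁,
      norm_smul, mul_pow, Real.norm_eq_abs, sq_abs]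
    ring
  have hv2 : ⟪-δ₁, ρ₁ • δ₁ + ρ₂ • δ₂⟫_ℝ + ρ₂ * ⟪δ₂, δ₁ - δ₂⟫_ℝ
      = -(ρ₁*‖δ₁‖^2) - ρ₂*‖δ₂‖^2 := by
    simp only [inner_add_right, inner_sub_right, inner_neg_left, real_inner_smul_right,
      real_inner_self_eq_norm_sq, real_inner_comm δ₂ δ₁]
    ring
  rw [hv1, hv2] at hfinal
  obtain ⟨hle₁, hle₂⟩ := step3 ρ₁ ρ₂ (‖δ₁‖^2) (‖δ₂‖^2) hρ₁ hρ₂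
    (sq_nonneg _) (sq_nonneg _) hfinal
  have hδ₁0 : δ₁ = 0 := by
    have h7 : ‖δ₁‖^2 = 0 := le_antisymm hle₁ (sq_nonneg _)
    exact norm_eq_zero.mp (pow_eq_zero_iff two_ne_zero |>.mp h7)
  have hδ₂0 : δ₂ = 0 := by
    have h7 : ‖δ₂‖^2 = 0 := le_antisymm hle₂ (sq_nonneg _)
    exact norm_eq_zero.mp (pow_eq_zero_iff two_ne_zero |>.mp h7)
  constructor
  · rw [← sub_eq_zero, ← hδ₁def]; exact hδ₁0
  · rw [← sub_eq_zero, ← hδ₂def]; exact hδ₂0
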